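/- Let e = {i, j} be an edge of a connected graph G on n vertices, and let the perturbation matrix L̂ be â_e (1_i - 1_j)(1_i - 1_j)ᵀ (perturbation only on edge e) with â_e ≠ 0. Then the eigenvalues of L̂ are 2â_e (simple) and 0 (multiplicity n-1), and the Kirchhoff index perturbation ΔKf(G^w_e) = -n·tr(L† L̂ L†) satisfies 1/λ₁² ≤ ΔKf(G^w_e) / (-2n â_e) ≤ 1/λ_{n-1}², where λ₁ ≥ ⋯ ≥ λ_{n-1} > 0 are the nonzero Laplacian eigenvalues of G. -/

import Mathlib

open Matrix

lemma aux_trace_eq_sum_eigenvalues {m : ℕ} {A : Matrix (Fin m) (Fin m) ℝ} (hA : A.IsHermitian) :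
    A.trace = ∑ k, hA.eigenvalues k := by
  conv_lhs => rw [hA.spectral_theorem, Unitary.conjStarAlgAut_apply]
  rw [trace_mul_cycle,
    Matrix.mem_unitaryGroup_iff'.mp (Matrix.IsHermitian.eigenvectorUnitary hA).2, one_mul,
    trace_diagonal]
  simp

lemma aux_pinv_unique {m : Type*} [Fintype m] [DecidableEq m] (A B C : Matrix m m ℝ)
    (hB1 : A * B * A = A) (hB2 : B * A * B = B) (hB3 : (A * B)ᵀ = A * B) (hB4 : (B * A)ᵀ = B * A)
    (hC1 : A * C * A = A) (hC2 : C * A * C = C) (hC3 : (A * C)ᵀ = A * C) (hC4 : (C * A)ᵀ = C * A) :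
    B = C := by
  have hAB : A * B = A * C := by
    calc A * B = (A * B)ᵀ := hB3.symm
    _ = Bᵀ * Aᵀ := transpose_mul A B
    _ = Bᵀ * (A * C * A)ᵀ := by rw [hC1]
    _ = Bᵀ * (Aᵀ * (A * C)ᵀ) := by rw [transpose_mul]
    _ = (Bᵀ * Aᵀ) * (A * C)ᵀ := by rw [mul_assoc]
    _ = (A * B)ᵀ * (A * C) := by rw [transpose_mul A B, hC3]
    _ = (A * B) * (A * C) := by rw [hB3]
    _ = (A * B * A) * C := by simp only [mul_assoc]
    _ = A * C := by rw [hB1]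
  have hBA : B * A = C * A := by
    calc B * A = (B * A)ᵀ := hB4.symm
    _ = Aᵀ * Bᵀ := transpose_mul B A
    _ = (A * C * A)ᵀ * Bᵀ := by rw [hC1]
    _ = (A * (C * A))ᵀ * Bᵀ := by rw [mul_assoc]
    _ = ((C * A)ᵀ * Aᵀ) * Bᵀ := by rw [transpose_mul]
    _ = (C * A) * (Aᵀ * Bᵀ) := by rw [hC4, mul_assoc]
    _ = (C * A) * (B * A)ᵀ := by rw [transpose_mul]
    _ = (C * A) * (B * A) := by rw [hB4]
    _ = C * (A * B * A) := by simp only [mul_assoc]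
    _ = C * A := by rw [hB1]
  calc B = B * A * B := hB2.symm
  _ = (C * A) * B := by rw [hBA]
  _ = C * (A * B) := by rw [mul_assoc]
  _ = C * (A * C) := by rw [hAB]
  _ = C * A * C := by rw [mul_assoc]
  _ = C := hC2

lemma aux_multiset_sum (t : ℝ) (S : Multiset ℝ) (h : ∀ x ∈ S, x = 0 ∨ x = t) :
    S.sum = S.count t * t := by
  induction S using Multiset.induction_on with
  | empty => simp
  | cons x S ih =>
    have hS : ∀ y ∈ S, y = 0 ∨ y = t := fun y hy => h y (Multiset.mem_cons_of_mem hy)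
    have := ih hS
    rcases h x (Multiset.mem_cons_self x S) with hx | hx <;> subst hx
    · rcases eq_or_ne t 0 with h0 | h0
      · subst h0; simp_all
      · rw [Multiset.sum_cons, Multiset.count_cons_of_ne h0]
        simp [this]
    · rw [Multiset.sum_cons, Multiset.count_cons_self, this]
      push_cast; ring

lemma aux_multiset_count (t : ℝ) (ht : t ≠ 0) (S : Multiset ℝ) (h : ∀ x ∈ S, x = 0 ∨ x = t) :
    S.count 0 + S.count t = Multiset.card S := by
  induction S using Multiset.induction_on with
  | empty => simp
  | cons x S ih =>
    have hS : ∀ y ∈ S, y = 0 ∨ y = t := fun y hy => h y (Multiset.mem_cons_of_mem hy)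
    have := ih hS
    rcases h x (Multiset.mem_cons_self x S) with hx | hx <;> subst hx
    · rw [Multiset.count_cons_self, Multiset.count_cons_of_ne ht, Multiset.card_cons]
      omega
    · rw [Multiset.count_cons_self, Multiset.count_cons_of_ne (Ne.symm ht), Multiset.card_cons]
      omega

/-- Single-edge perturbation: for an edge `e = {i,j}` of a connected graph `G` on `n`
vertices, the perturbation matrix `L̂ = â_e (1_i - 1_j)(1_i - 1_j)ᵀ` with `â_e ≠ 0` has
eigenvalues `2â_e` (simple) and `0` (multiplicity `n-1`), and the Kirchhoff index
perturbation `ΔKf(G^w_e) = -n·tr(L† L̂ L†)` satisfies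
`1/λ₁² ≤ ΔKf(G^w_e) / (-2n â_e) ≤ 1/λ_{n-1}²`. -/
theorem kirchhoff_perturbation_single_edge {n : ℕ}
    (G : SimpleGraph (Fin (n + 2))) [DecidableRel G.Adj] (hG : G.Connected)
    (i j : Fin (n + 2)) (hadj : G.Adj i j) (a : ℝ) (ha : a ≠ 0)
    (Lhat : Matrix (Fin (n + 2)) (Fin (n + 2)) ℝ)
    (hLhat : Lhat = a • Matrix.vecMulVec
      ((Pi.single i 1 - Pi.single j 1 : Fin (n + 2) → ℝ))
      ((Pi.single i 1 - Pi.single j 1 : Fin (n + 2) → ℝ)))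
    (hhermLhat : Lhat.IsHermitian)
    (Ld : Matrix (Fin (n + 2)) (Fin (n + 2)) ℝ)
    (h1 : G.lapMatrix ℝ * Ld * G.lapMatrix ℝ = G.lapMatrix ℝ)
    (h2 : Ld * G.lapMatrix ℝ * Ld = Ld)
    (h3 : (G.lapMatrix ℝ * Ld)ᵀ = G.lapMatrix ℝ * Ld)
    (h4 : (Ld * G.lapMatrix ℝ)ᵀ = Ld * G.lapMatrix ℝ)
    (hhermL : (G.lapMatrix ℝ).IsHermitian)
    (lam : Fin (n + 2) → ℝ) (hanti : Antitone lam)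
    (hlam : ∃ σ : Equiv.Perm (Fin (n + 2)), ∀ k, hhermL.eigenvalues (σ k) = lam k)
    (hzero : lam (Fin.last (n + 1)) = 0)
    (hpos : 0 < lam ⟨n, by omega⟩) :
    (Finset.univ.val.map hhermLhat.eigenvalues
        = (2 * a) ::ₘ Multiset.replicate (n + 1) 0) ∧
      1 / (lam 0) ^ 2
          ≤ (-(((n : ℝ) + 2)) * (Ld * Lhat * Ld).trace) / (-2 * ((n : ℝ) + 2) * a) ∧
        (-(((n : ℝ) + 2)) * (Ld * Lhat * Ld).trace) / (-2 * ((n : ℝ) + 2) * a)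
          ≤ 1 / (lam ⟨n, by omega⟩) ^ 2 := by
  have hne : i ≠ j := G.ne_of_adj hadj
  set L := G.lapMatrix ℝ with hLdef
  set u : Fin (n + 2) → ℝ := Pi.single i 1 - Pi.single j 1 with hu
  -- basic facts about u
  have hui : u i = 1 := by simp [hu, Pi.single_eq_of_ne hne]
  have huj : u j = -1 := by simp [hu, Pi.single_eq_of_ne (Ne.symm hne)]
  have huu : u ⬝ᵥ u = 2 := by
    rw [show u ⬝ᵥ u = u ⬝ᵥ Pi.single i 1 - u ⬝ᵥ Pi.single j 1 by rw [← dotProduct_sub]]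
    rw [dotProduct_single, dotProduct_single, hui, huj]; ring
  have hu1 : u ⬝ᵥ (fun _ => (1:ℝ)) = 0 := by
    rw [hu, sub_dotProduct, single_dotProduct, single_dotProduct]; ring
  ------------------------------------------------------------------
  -- Part 1 : eigenvalues of Lhat
  ------------------------------------------------------------------
  have h2a : (2 : ℝ) * a ≠ 0 := by
    intro h; exact ha (by linarith)
  have hsq : Lhat * Lhat = (2 * a) • Lhat := by
    rw [hLhat, Matrix.smul_mul, Matrix.mul_smul, smul_smul]
    have key : vecMulVec u u * vecMulVec u u = (2 : ℝ) • vecMulVec u u := by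
      ext k l
      simp only [mul_apply, vecMulVec_apply, Matrix.smul_apply, smul_eq_mul]
      rw [← huu]
      simp only [dotProduct]
      rw [Finset.sum_mul]
      exact Finset.sum_congr rfl fun m _ => by ring
    rw [key, smul_smul, smul_smul]
    ring_nf
  have heig : ∀ k, hhermLhat.eigenvalues k = 0 ∨ hhermLhat.eigenvalues k = 2 * a := by
    intro k
    have hv := hhermLhat.mulVec_eigenvectorBasis k
    set μ := hhermLhat.eigenvalues k
    set v : Fin (n + 2) → ℝ := ⇑(hhermLhat.eigenvectorBasis k) with hvdef
    have hv2 : Lhat *ᵥ (Lhat *ᵥ v) = (μ * μ) • v := by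
      rw [hv, mulVec_smul, hv, smul_smul]
    have hv3 : Lhat *ᵥ (Lhat *ᵥ v) = ((2 * a) * μ) • v := by
      rw [mulVec_mulVec, hsq, smul_mulVec, hv, smul_smul]
    have hvne : v ≠ 0 := by
      intro h0
      exact hhermLhat.eigenvectorBasis.orthonormal.ne_zero k (by ext idx; exact congrFun h0 idx)
    have hzv : (μ * μ - (2 * a) * μ) • v = 0 := by
      rw [sub_smul, ← hv2, ← hv3, sub_self]
    rcases smul_eq_zero.mp hzv with h | h
    · have h' : μ * (μ - 2 * a) = 0 := by ring_nf; ring_nf at h; linarith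
      rcases mul_eq_zero.mp h' with h1 | h1
      · exact Or.inl h1
      · exact Or.inr (by linarith)
    · exact absurd h hvne
  have htr : Lhat.trace = 2 * a := by
    rw [hLhat, trace_smul, smul_eq_mul]
    have : (vecMulVec u u).trace = u ⬝ᵥ u := by
      simp [Matrix.trace, Matrix.diag, vecMulVec_apply, dotProduct]
    rw [this, huu]; ring
  have part1 : Finset.univ.val.map hhermLhat.eigenvalues
      = (2 * a) ::ₘ Multiset.replicate (n + 1) 0 := by
    set S := Finset.univ.val.map hhermLhat.eigenvalues with hS
    have hmem : ∀ x ∈ S, x = 0 ∨ x = 2 * a := by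
      intro x hx
      obtain ⟨k, _, rfl⟩ := Multiset.mem_map.mp hx
      exact heig k
    have hsum : S.sum = 2 * a := by
      rw [hS, ← Finset.sum, ← aux_trace_eq_sum_eigenvalues hhermLhat, htr]
    have hcard : Multiset.card S = n + 2 := by simp [hS]
    have hc1 : S.count (2 * a) = 1 := by
      have h' := aux_multiset_sum (2 * a) S hmem
      rw [hsum] at h'
      have h'' : ((S.count (2 * a) : ℝ)) * (2 * a) = 1 * (2 * a) := by rw [one_mul, ← h']
      have := mul_right_cancel₀ h2a h''
      exact_mod_cast this
    have hc0 : S.count 0 = n + 1 := by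
      have := aux_multiset_count (2 * a) h2a S hmem
      omega
    ext b
    rw [Multiset.count_cons, Multiset.count_replicate]
    rcases eq_or_ne b (2 * a) with rfl | hb
    · simp [hc1, h2a, Ne.symm h2a]
    · rcases eq_or_ne b 0 with rfl | hb0
      · simp [hc0, hb]
      · rw [Multiset.count_eq_zero_of_notMem, if_neg (fun h => hb0 h.symm), if_neg hb]
        intro hmem'
        rcases hmem b hmem' with h | h <;> [exact hb0 h; exact hb h]
  ------------------------------------------------------------------
  -- Part 2 : setup for the pseudoinverse
  ------------------------------------------------------------------
  have hsym : Lᵀ = L := G.isSymm_lapMatrix (R := ℝ)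
  have hLdsym : Ldᵀ = Ld := by
    refine (aux_pinv_unique L Ldᵀ Ld ?_ ?_ ?_ ?_ h1 h2 h3 h4)
    · calc L * Ldᵀ * L = Lᵀ * Ldᵀ * Lᵀ := by rw [hsym]
      _ = (Ld * L)ᵀ * Lᵀ := by rw [transpose_mul]
      _ = (L * (Ld * L))ᵀ := by rw [transpose_mul L (Ld * L), transpose_mul Ld L]
      _ = (L * Ld * L)ᵀ := by rw [mul_assoc]
      _ = Lᵀ := by rw [h1]
      _ = L := hsym
    · calc Ldᵀ * L * Ldᵀ = Ldᵀ * Lᵀ * Ldᵀ := by rw [hsym]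
      _ = (Ld * (L * Ld))ᵀ := by rw [transpose_mul Ld (L * Ld), transpose_mul L Ld]
      _ = (Ld * L * Ld)ᵀ := by rw [mul_assoc]
      _ = Ldᵀ := by rw [h2]
    · calc (L * Ldᵀ)ᵀ = (Lᵀ * Ldᵀ)ᵀ := by rw [hsym]
      _ = ((Ld * L)ᵀ)ᵀ := by rw [transpose_mul Ld L]
      _ = Ld * L := by rw [transpose_transpose]
      _ = (Ld * L)ᵀ := h4.symm
      _ = Lᵀ * Ldᵀ := by rw [transpose_mul]
      _ = L * Ldᵀ := by rw [hsym]
    · calc (Ldᵀ * L)ᵀ = (Ldᵀ * Lᵀ)ᵀ := by rw [hsym]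
      _ = ((L * Ld)ᵀ)ᵀ := by rw [transpose_mul L Ld]
      _ = L * Ld := by rw [transpose_transpose]
      _ = (L * Ld)ᵀ := h3.symm
      _ = Ldᵀ * Lᵀ := by rw [transpose_mul]
      _ = Ldᵀ * L := by rw [hsym]
  have hcomm : L * Ld = Ld * L := by
    calc L * Ld = (L * Ld)ᵀ := h3.symm
    _ = Ldᵀ * Lᵀ := by rw [transpose_mul]
    _ = Ld * L := by rw [hLdsym, hsym]
  have hL1 : L *ᵥ (fun _ => (1:ℝ)) = 0 := G.lapMatrix_mulVec_const_eq_zero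
  have hLd1 : Ld *ᵥ (fun _ => (1:ℝ)) = 0 := by
    have hh : Ld = Ld * Ld * L := by rw [mul_assoc, ← hcomm, ← mul_assoc, h2]
    rw [hh, ← mulVec_mulVec, hL1, mulVec_zero]
  have hker : ∀ x : Fin (n+2) → ℝ, L *ᵥ x = 0 → ∃ c : ℝ, x = fun _ => c := by
    intro x hx
    have h := (G.lapMatrix_mulVec_eq_zero_iff_forall_reachable).mp
      (hx)
    exact ⟨x 0, funext fun m => h m 0 (hG.preconnected m 0)⟩
  have hdot : ∀ (M : Matrix (Fin (n+2)) (Fin (n+2)) ℝ) (x y : Fin (n+2) → ℝ),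
      (M *ᵥ x) ⬝ᵥ y = x ⬝ᵥ (Mᵀ *ᵥ y) := by
    intro M x y
    rw [dotProduct_comm, dotProduct_mulVec, dotProduct_comm, mulVec_transpose]
  set w : Fin (n + 2) → ℝ := Ld *ᵥ u with hw
  have hw1 : w ⬝ᵥ (fun _ => (1:ℝ)) = 0 := by
    rw [hw, hdot, hLdsym, hLd1, dotProduct_zero]
  have hLw : L *ᵥ w = u := by
    set r : Fin (n+2) → ℝ := u - L *ᵥ w with hr
    have hrk : L *ᵥ r = 0 := by
      have hLLLd : L * L * Ld = L := by rw [mul_assoc, hcomm, ← mul_assoc, h1]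
      rw [hr, mulVec_sub, mulVec_mulVec, hw, mulVec_mulVec, hLLLd, sub_self]
    obtain ⟨c, hc⟩ := hker r hrk
    have hr1 : r ⬝ᵥ (fun _ => (1:ℝ)) = 0 := by
      rw [hr, sub_dotProduct, hu1, hdot, hsym, hL1, dotProduct_zero, sub_zero]
    rw [hc] at hr1
    have hc0 : c = 0 := by
      simp [dotProduct] at hr1
      have hn2 : (0:ℝ) < (n:ℝ) + 2 := by positivity
      rcases hr1 with h | h
      all_goals first | exact h | linarith
    have hr0 : u - L *ᵥ w = 0 := by rw [← hr, hc, hc0]; ext; simp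
    exact (sub_eq_zero.mp hr0).symm
  -- trace computation
  have hsymLd : ∀ p q, Ld p q = Ld q p := by
    intro p q
    exact congrFun (congrFun hLdsym q) p
  have htrace : (Ld * Lhat * Ld).trace = a * (w ⬝ᵥ w) := by
    have hmid : Ld * vecMulVec u u * Ld = vecMulVec w w := by
      ext k l
      simp only [mul_apply, vecMulVec_apply, hw, mulVec, dotProduct]
      rw [Finset.mul_sum]
      refine Finset.sum_congr rfl fun q _ => ?_
      rw [show (∑ p, Ld k p * (u p * u q)) = (∑ p, Ld k p * u p) * u q from by
        rw [Finset.sum_mul]; exact Finset.sum_congr rfl fun p _ => by ring]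
      rw [hsymLd q l]; ring
    rw [hLhat, Matrix.mul_smul, Matrix.smul_mul, hmid, trace_smul, smul_eq_mul]
    have htrvv : (vecMulVec w w).trace = w ⬝ᵥ w := by
      simp [Matrix.trace, Matrix.diag, vecMulVec_apply, dotProduct]
    rw [htrvv]
  ------------------------------------------------------------------
  -- Part 2 : spectral estimates
  ------------------------------------------------------------------
  set U : Matrix (Fin (n+2)) (Fin (n+2)) ℝ := (hhermL.eigenvectorUnitary : Matrix (Fin (n+2)) (Fin (n+2)) ℝ) with hU
  set μ : Fin (n+2) → ℝ := hhermL.eigenvalues with hμ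
  have hU1 : star U * U = 1 := Matrix.mem_unitaryGroup_iff'.mp hhermL.eigenvectorUnitary.2
  have hU2 : U * star U = 1 := Matrix.mem_unitaryGroup_iff.mp hhermL.eigenvectorUnitary.2
  have hstar : star U = Uᵀ := by
    rw [Matrix.star_eq_conjTranspose, conjTranspose_eq_transpose_of_trivial]
  have hspec : L = U * diagonal μ * Uᵀ := by
    have hco : (RCLike.ofReal ∘ hhermL.eigenvalues : Fin (n+2) → ℝ) = hhermL.eigenvalues := by
      funext k; simp
    rw [← hstar, hU, hμ]
    conv_lhs => rw [hhermL.spectral_theorem, Unitary.conjStarAlgAut_apply, hco]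
  set y : Fin (n+2) → ℝ := Uᵀ *ᵥ w with hy
  have hnormpres : ∀ z : Fin (n+2) → ℝ, (U *ᵥ z) ⬝ᵥ (U *ᵥ z) = z ⬝ᵥ z := by
    intro z
    rw [hdot, mulVec_mulVec, ← hstar, hU1, one_mulVec]
  have hwy : w = U *ᵥ y := by
    rw [hy, mulVec_mulVec, ← hstar, hU2, one_mulVec]
  have hww : w ⬝ᵥ w = y ⬝ᵥ y := by
    conv_lhs => rw [hwy]
    rw [hnormpres]
  have huy : u = U *ᵥ (fun k => μ k * y k) := by
    have hDy : diagonal μ *ᵥ y = fun k => μ k * y k := funext fun k => mulVec_diagonal μ y k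
    rw [← hLw]
    calc L *ᵥ w = (U * diagonal μ * Uᵀ) *ᵥ w := by rw [← hspec]
    _ = (U * diagonal μ) *ᵥ (Uᵀ *ᵥ w) := by conv_rhs => rw [mulVec_mulVec]
    _ = U *ᵥ (diagonal μ *ᵥ (Uᵀ *ᵥ w)) := by conv_rhs => rw [mulVec_mulVec]
    _ = U *ᵥ (fun k => μ k * y k) := by rw [← hy, hDy]
  have huu2 : (2:ℝ) = ∑ k, μ k^2 * (y k)^2 := by
    rw [← huu]
    conv_lhs => rw [huy, hnormpres]
    simp only [dotProduct]
    exact Finset.sum_congr rfl fun k _ => by ring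
  have hy0 : ∀ k, μ k = 0 → y k = 0 := by
    intro k hk
    have hv := hhermL.mulVec_eigenvectorBasis k
    rw [show hhermL.eigenvalues k = μ k from rfl, hk, zero_smul] at hv
    obtain ⟨c, hc⟩ := hker _ hv
    have hyk : y k = ∑ m, U m k * w m := by
      rw [hy]; simp [mulVec, dotProduct, transpose_apply]
    have hUmk : ∀ m, U m k = c := by
      intro m
      have := Matrix.IsHermitian.eigenvectorUnitary_apply hhermL m k
      rw [hU, this, hc]
    have hwsum : ∑ m, w m = 0 := by
      simpa [dotProduct] using hw1
    rw [hyk]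
    calc ∑ m, U m k * w m = ∑ m, c * w m := by
          exact Finset.sum_congr rfl fun m _ => by rw [hUmk m]
    _ = c * ∑ m, w m := by rw [Finset.mul_sum]
    _ = 0 := by rw [hwsum, mul_zero]
  obtain ⟨σ, hσ⟩ := hlam
  set lmin : ℝ := lam ⟨n, by omega⟩ with hlmin
  set lmax : ℝ := lam 0 with hlmax
  have hlmaxpos : 0 < lmax := lt_of_lt_of_le hpos (hanti (Fin.zero_le _))
  have hbound : ∀ k, lmin^2 * (y k)^2 ≤ μ k^2 * (y k)^2 ∧ μ k^2 * (y k)^2 ≤ lmax^2 * (y k)^2 := by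
    intro k
    have hμk : μ k = lam (σ.symm k) := by
      rw [hμ, ← hσ (σ.symm k), Equiv.apply_symm_apply]
    rcases eq_or_ne (σ.symm k) (Fin.last (n+1)) with hm | hm
    · have h0 : μ k = 0 := by rw [hμk, hm, hzero]
      have := hy0 k h0
      rw [h0, this]
      norm_num
    · have hmle : σ.symm k ≤ (⟨n, by omega⟩ : Fin (n+2)) := by
        have h1' := (σ.symm k).isLt
        have h2' : (σ.symm k).val ≠ n + 1 := fun h => hm (Fin.ext h)
        rw [Fin.le_def]
        have hval : ((⟨n, by omega⟩ : Fin (n+2)) : ℕ) = n := rfl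
        omega
      have hle1 : lmin ≤ lam (σ.symm k) := hanti hmle
      have hle2 : lam (σ.symm k) ≤ lmax := hanti (Fin.zero_le _)
      have hs1 : lmin^2 ≤ μ k^2 := by
        rw [hμk]; exact pow_le_pow_left₀ (le_of_lt hpos) hle1 2
      have hs2 : μ k^2 ≤ lmax^2 := by
        rw [hμk]; exact pow_le_pow_left₀ (by linarith) hle2 2
      exact ⟨mul_le_mul_of_nonneg_right hs1 (sq_nonneg _),
        mul_le_mul_of_nonneg_right hs2 (sq_nonneg _)⟩
  have hsum1 : lmin^2 * (y ⬝ᵥ y) ≤ 2 := by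
    have hstep : ∑ k, lmin^2 * (y k)^2 ≤ ∑ k, μ k^2 * (y k)^2 :=
      Finset.sum_le_sum fun k _ => (hbound k).1
    rw [← huu2] at hstep
    calc lmin^2 * (y ⬝ᵥ y) = ∑ k, lmin^2 * (y k)^2 := by
          simp only [dotProduct]; rw [Finset.mul_sum]
          exact Finset.sum_congr rfl fun k _ => by ring
    _ ≤ 2 := hstep
  have hsum2 : (2:ℝ) ≤ lmax^2 * (y ⬝ᵥ y) := by
    have hstep : ∑ k, μ k^2 * (y k)^2 ≤ ∑ k, lmax^2 * (y k)^2 :=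
      Finset.sum_le_sum fun k _ => (hbound k).2
    rw [← huu2] at hstep
    calc (2:ℝ) ≤ ∑ k, lmax^2 * (y k)^2 := hstep
    _ = lmax^2 * (y ⬝ᵥ y) := by
          simp only [dotProduct]; rw [Finset.mul_sum]
          exact Finset.sum_congr rfl fun k _ => by ring
  -- final arithmetic
  have hn2 : ((n:ℝ) + 2) ≠ 0 := by positivity
  have hE : (-(((n : ℝ) + 2)) * (Ld * Lhat * Ld).trace) / (-2 * ((n : ℝ) + 2) * a)
      = (y ⬝ᵥ y) / 2 := by
    rw [htrace, hww]
    field_simp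
  refine ⟨part1, ?_, ?_⟩
  · rw [hE]
    rw [div_le_div_iff₀ (by positivity) (by norm_num)]
    nlinarith [hsum2]
  · rw [hE]
    rw [div_le_div_iff₀ (by norm_num) (by positivity)]
    nlinarith [hsum1]
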